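/- For every integer n ≥ 2, the sum over k = 1 to n−1 of 1/sin²(πk/n) equals (n² − 1)/3. -/

import Mathlib

open Real Finset

/-- Gauss sum over ℂ. -/
lemma sumA_aux (n : ℕ) : ∑ j ∈ Finset.range n, ((j : ℂ) + 1) = n * (n + 1) / 2 := by
  induction n with
  | zero => simp
  | succ m ih => rw [Finset.sum_range_succ, ih]; push_cast; ring

lemma sumB_aux (n : ℕ) : ∑ j ∈ Finset.range n, ((j : ℂ) + 1) * (j : ℂ)
    = n * (n + 1) * (n - 1) / 3 := by
  induction n with
  | zero => simp
  | succ m ih => rw [Finset.sum_range_succ, ih]; push_cast; ring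

lemma sumC_aux (n : ℕ) : ∑ j ∈ Finset.range n, (((j : ℂ) + 1) * ((n : ℂ) - j))
    = n * (n + 1) * (n + 2) / 6 := by
  have h : ∀ j ∈ Finset.range n, ((j : ℂ) + 1) * ((n : ℂ) - j)
      = ((j : ℂ) + 1) * n - ((j : ℂ) + 1) * j := by intro j _; ring
  rw [Finset.sum_congr rfl h, Finset.sum_sub_distrib, ← Finset.sum_mul, sumA_aux, sumB_aux]
  ring

/-- Telescoping identity: `(∑ (j+1) x^j) (x-1) = n x^n - ∑ x^j`. -/
lemma telescope_aux (x : ℂ) (n : ℕ) :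
    (∑ j ∈ Finset.range n, ((j : ℂ) + 1) * x ^ j) * (x - 1)
      = n * x ^ n - ∑ j ∈ Finset.range n, x ^ j := by
  induction n with
  | zero => simp
  | succ m ih =>
    rw [Finset.sum_range_succ, Finset.sum_range_succ, add_mul, ih]
    push_cast
    ring

theorem sum_inv_sin_sq (n : ℕ) (hn : 2 ≤ n) :
    ∑ k ∈ Finset.Ico 1 n, 1 / Real.sin (Real.pi * k / n) ^ 2 = ((n : ℝ) ^ 2 - 1) / 3 := by
  have hn0 : (n : ℂ) ≠ 0 := by exact_mod_cast (by omega : n ≠ 0)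
  set ζ : ℂ := Complex.exp (2 * Real.pi * Complex.I / n) with hζdef
  have hprim : IsPrimitiveRoot ζ n := Complex.isPrimitiveRoot_exp n (by omega)
  have hζn : ζ ^ n = 1 := hprim.pow_eq_one
  set g : ℕ → ℂ := fun k => ζ ^ k * (∑ j ∈ Finset.range n, ((j : ℂ) + 1) * (ζ ^ k) ^ j) ^ 2
    with hgdef
  -- Step 1: pointwise identification with 1/sin^2
  have key : ∀ k ∈ Finset.Ico 1 n,
      g k = -((n : ℂ) ^ 2 / 4) * ((1 / Real.sin (Real.pi * k / n) ^ 2 : ℝ) : ℂ) := by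
    intro k hk
    rw [Finset.mem_Ico] at hk
    set x : ℂ := ζ ^ k with hxdef
    have hx1 : x ≠ 1 := hprim.pow_ne_one_of_pos_of_lt (by omega) hk.2
    have hxn : x ^ n = 1 := by rw [hxdef, ← pow_mul, mul_comm, pow_mul, hζn, one_pow]
    have hgeo : ∑ j ∈ Finset.range n, x ^ j = 0 := by
      rw [geom_sum_eq hx1, hxn, sub_self, zero_div]
    have h1 : (∑ j ∈ Finset.range n, ((j : ℂ) + 1) * x ^ j) * (x - 1) = n := by
      rw [telescope_aux, hxn, hgeo]; ring
    set θ : ℝ := Real.pi * k / n with hθdef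
    have hθpos : 0 < θ := by
      apply div_pos (mul_pos Real.pi_pos (by exact_mod_cast hk.1)) (by positivity)
    have hθlt : θ < Real.pi := by
      rw [hθdef, div_lt_iff₀ (by positivity : (0:ℝ) < n)]
      have hkn : (k : ℝ) < n := by exact_mod_cast hk.2
      nlinarith [Real.pi_pos]
    have hs : Real.sin θ ≠ 0 := ne_of_gt (Real.sin_pos_of_pos_of_lt_pi hθpos hθlt)
    set s : ℂ := (Real.sin θ : ℂ) with hsdef
    have hsne : s ≠ 0 := Complex.ofReal_ne_zero.mpr hs
    set w : ℂ := Complex.exp (θ * Complex.I) with hwdef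
    have hw0 : w ≠ 0 := Complex.exp_ne_zero _
    have hw2 : w ^ 2 = x := by
      rw [hwdef, hxdef, hζdef, ← Complex.exp_nat_mul, ← Complex.exp_nat_mul]
      congr 1
      rw [hθdef]
      push_cast
      field_simp
    have hwinv : w⁻¹ = Complex.exp (-(θ * Complex.I)) := by
      rw [hwdef, ← Complex.exp_neg]
    have hdiff : w - w⁻¹ = 2 * s * Complex.I := by
      rw [hwdef, hwinv, ← neg_mul, Complex.exp_mul_I, Complex.exp_mul_I,
        Complex.cos_neg, Complex.sin_neg, hsdef, Complex.ofReal_sin]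
      ring
    have h2 : (x - 1) ^ 2 = -4 * x * s ^ 2 := by
      have hx1' : x - 1 = (w - w⁻¹) * w := by
        rw [← hw2, sub_mul, inv_mul_cancel₀ hw0, sq]
      rw [hx1', hdiff, mul_pow, hw2,
        show (2 * s * Complex.I) ^ 2 = 4 * s ^ 2 * Complex.I ^ 2 by ring, Complex.I_sq]
      ring
    have hx0 : x ≠ 0 := by
      rw [hxdef, hζdef]
      exact pow_ne_zero k (Complex.exp_ne_zero _)
    have h3 : (∑ j ∈ Finset.range n, ((j : ℂ) + 1) * x ^ j) ^ 2 * (-4 * x * s ^ 2)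
        = (n : ℂ) ^ 2 := by
      rw [← h2, ← mul_pow, h1]
    have hcast : ((1 / Real.sin θ ^ 2 : ℝ) : ℂ) = 1 / s ^ 2 := by
      rw [hsdef]; push_cast; ring
    show x * (∑ j ∈ Finset.range n, ((j : ℂ) + 1) * x ^ j) ^ 2
        = -((n : ℂ) ^ 2 / 4) * ((1 / Real.sin θ ^ 2 : ℝ) : ℂ)
    rw [hcast]
    field_simp
    linear_combination -h3
  -- Step 2: inner geometric sums
  have hinner : ∀ m : ℕ, 1 ≤ m → m ≤ 2 * n - 1 →
      ∑ k ∈ Finset.range n, (ζ ^ m) ^ k = if m = n then (n : ℂ) else 0 := by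
    intro m hm1 hm2
    by_cases h : m = n
    · subst h
      simp [hζn]
    · rw [if_neg h]
      have hne : ζ ^ m ≠ 1 := by
        rw [Ne, hprim.pow_eq_one_iff_dvd]
        rintro ⟨c, rfl⟩
        rcases Nat.lt_or_ge c 2 with hc | hc
        · interval_cases c <;> omega
        · have h2n : n * 2 ≤ n * c := Nat.mul_le_mul_left n hc
          omega
      rw [geom_sum_eq hne, ← pow_mul, mul_comm, pow_mul, hζn, one_pow, sub_self, zero_div]
  -- Step 3: total sum over range n
  have hT : ∑ k ∈ Finset.range n, g k = (n : ℂ) ^ 2 * (n + 1) * (n + 2) / 6 := by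
    have step1 : ∑ k ∈ Finset.range n, g k
        = ∑ k ∈ Finset.range n, ∑ j ∈ Finset.range n, ∑ l ∈ Finset.range n,
            ((j : ℂ) + 1) * ((l : ℂ) + 1) * (ζ ^ (1 + j + l)) ^ k := by
      refine Finset.sum_congr rfl fun k _ => ?_
      show ζ ^ k * (∑ j ∈ Finset.range n, ((j : ℂ) + 1) * (ζ ^ k) ^ j) ^ 2 = _
      rw [sq, Finset.sum_mul_sum, Finset.mul_sum]
      refine Finset.sum_congr rfl fun j _ => ?_
      rw [Finset.mul_sum]
      refine Finset.sum_congr rfl fun l _ => ?_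
      rw [← pow_mul, ← pow_mul, ← pow_mul,
        show (1 + j + l) * k = k * j + (k * l + k) by ring, pow_add, pow_add]
      ring
    have step2 : ∑ k ∈ Finset.range n, ∑ j ∈ Finset.range n, ∑ l ∈ Finset.range n,
            ((j : ℂ) + 1) * ((l : ℂ) + 1) * (ζ ^ (1 + j + l)) ^ k
        = ∑ j ∈ Finset.range n, ∑ l ∈ Finset.range n,
            ((j : ℂ) + 1) * ((l : ℂ) + 1) * ∑ k ∈ Finset.range n, (ζ ^ (1 + j + l)) ^ k := by
      rw [Finset.sum_comm]
      refine Finset.sum_congr rfl fun j _ => ?_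
      rw [Finset.sum_comm]
      refine Finset.sum_congr rfl fun l _ => ?_
      rw [Finset.mul_sum]
    have step3 : ∑ j ∈ Finset.range n, ∑ l ∈ Finset.range n,
            ((j : ℂ) + 1) * ((l : ℂ) + 1) * ∑ k ∈ Finset.range n, (ζ ^ (1 + j + l)) ^ k
        = ∑ j ∈ Finset.range n, ((j : ℂ) + 1) * ((n : ℂ) - j) * n := by
      refine Finset.sum_congr rfl fun j hj => ?_
      have hjn : j < n := Finset.mem_range.mp hj
      have hite : ∀ l ∈ Finset.range n,
          ((j : ℂ) + 1) * ((l : ℂ) + 1) * ∑ k ∈ Finset.range n, (ζ ^ (1 + j + l)) ^ k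
          = if l = n - 1 - j then ((j : ℂ) + 1) * ((l : ℂ) + 1) * n else 0 := by
        intro l hl
        have hln : l < n := Finset.mem_range.mp hl
        rw [hinner (1 + j + l) (by omega) (by omega)]
        by_cases h : 1 + j + l = n
        · rw [if_pos (by omega : l = n - 1 - j), if_pos h]
        · rw [if_neg h, if_neg (by omega : ¬ l = n - 1 - j), mul_zero]
      rw [Finset.sum_congr rfl hite, Finset.sum_ite_eq' (Finset.range n) (n - 1 - j),
        if_pos (Finset.mem_range.mpr (by omega))]
      have hc : ((n - 1 - j : ℕ) : ℂ) + 1 = (n : ℂ) - j := by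
        have : ((n - 1 - j : ℕ) : ℂ) = ((n : ℂ)) - 1 - j := by
          rw [Nat.sub_sub, Nat.cast_sub (by omega)]
          push_cast
          ring
        rw [this]; ring
      rw [hc]
    rw [step1, step2, step3, ← Finset.sum_mul, sumC_aux]
    ring
  -- Step 4: split off k = 0
  have hsplit : ∑ k ∈ Finset.range n, g k = g 0 + ∑ k ∈ Finset.Ico 1 n, g k := by
    rw [Finset.range_eq_Ico, Finset.sum_eq_sum_Ico_succ_bot (by omega : 0 < n)]
  have hg0 : g 0 = (n : ℂ) ^ 2 * (n + 1) ^ 2 / 4 := by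
    show ζ ^ 0 * (∑ j ∈ Finset.range n, ((j : ℂ) + 1) * (ζ ^ 0) ^ j) ^ 2 = _
    simp only [pow_zero, one_pow, mul_one, one_mul]
    rw [sumA_aux]
    ring
  have hS : ∑ k ∈ Finset.Ico 1 n, g k
      = (n : ℂ) ^ 2 * (n + 1) * (n + 2) / 6 - (n : ℂ) ^ 2 * (n + 1) ^ 2 / 4 := by
    have h := hsplit
    rw [hT, hg0] at h
    linear_combination -h
  have hreal : ∑ k ∈ Finset.Ico 1 n, g k
      = -((n : ℂ) ^ 2 / 4)
        * ((∑ k ∈ Finset.Ico 1 n, 1 / Real.sin (Real.pi * k / n) ^ 2 : ℝ) : ℂ) := by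
    rw [Finset.sum_congr rfl key, ← Finset.mul_sum]
    congr 1
    push_cast
    rfl
  have hfin : ((∑ k ∈ Finset.Ico 1 n, 1 / Real.sin (Real.pi * k / n) ^ 2 : ℝ) : ℂ)
      = ((n : ℂ) ^ 2 - 1) / 3 := by
    have h := hreal.symm.trans hS
    have h4 : (n : ℂ) ^ 2 * ((∑ k ∈ Finset.Ico 1 n, 1 / Real.sin (Real.pi * k / n) ^ 2 : ℝ) : ℂ)
        = (n : ℂ) ^ 2 * (((n : ℂ) ^ 2 - 1) / 3) := by linear_combination (-4 : ℂ) * h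
    exact mul_left_cancel₀ (pow_ne_zero 2 hn0) h4
  have := hfin
  push_cast at this
  exact_mod_cast this
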